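/- Let a, b > 0 be real numbers and fix τ ∈ (0,1), and let t ∈ (0,1). If t ≤ min{τ, 1-τ} or t ≥ max{τ, 1-τ}, then (a ∇ b - !_τ(a,b)) / (τ(1-τ)) ≤ (a ∇ b - !_t(a,b)) / (t(1-t)). If instead min{τ, 1-τ} ≤ t ≤ max{τ, 1-τ}, the reverse inequality holds. -/

import Mathlib

/-- The weighted harmonic mean of positive reals: `a !_t b = ((1-t)a⁻¹ + t b⁻¹)⁻¹`. -/
noncomputable def wharm (t a b : ℝ) : ℝ := ((1 - t) * a⁻¹ + t * b⁻¹)⁻¹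

/-- The harmonic Heinz mean `!_t(a,b) = (a !_t b + a !_{1-t} b)/2`. -/
noncomputable def heinzHarm (t a b : ℝ) : ℝ := (wharm t a b + wharm (1 - t) a b) / 2

lemma wharm_eq (t a b : ℝ) (ha : 0 < a) (hb : 0 < b) (hd : (1 - t) * b + t * a ≠ 0) :
    wharm t a b = a * b / ((1 - t) * b + t * a) := by
  unfold wharm
  have h : (1 - t) * a⁻¹ + t * b⁻¹ = ((1 - t) * b + t * a) / (a * b) := by
    field_simp
  rw [h, inv_div]

lemma heinz_key (a b t : ℝ) (ha : 0 < a) (hb : 0 < b) (ht : t ∈ Set.Ioo (0 : ℝ) 1) :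
    ((a + b) / 2 - heinzHarm t a b) / (t * (1 - t))
      = (a + b) * (a - b) ^ 2 / (2 * (t * (1 - t) * (a - b) ^ 2 + a * b)) := by
  obtain ⟨ht0, ht1⟩ := ht
  have h1t : (0:ℝ) < 1 - t := by linarith
  have d1 : (0:ℝ) < (1 - t) * b + t * a := by positivity
  have d2 : (0:ℝ) < (1 - (1 - t)) * b + (1 - t) * a := by
    have : (0:ℝ) < t := ht0
    have h : 1 - (1 - t) = t := by ring
    rw [h]; positivity
  have h3 : (0:ℝ) < t * (1 - t) * (a - b) ^ 2 + a * b := by positivity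
  unfold heinzHarm
  rw [wharm_eq t a b ha hb (ne_of_gt d1), wharm_eq (1 - t) a b ha hb (ne_of_gt d2)]
  rw [div_eq_div_iff (by positivity) (by positivity)]
  have d2' : t * b + (1 - t) * a ≠ 0 := by nlinarith
  rw [show (1:ℝ) - (1 - t) = t by ring]
  field_simp
  ring

theorem stmt_2 (a b τ t : ℝ) (ha : 0 < a) (hb : 0 < b)
    (hτ : τ ∈ Set.Ioo (0 : ℝ) 1) (ht : t ∈ Set.Ioo (0 : ℝ) 1) :
    ((t ≤ min τ (1 - τ) ∨ t ≥ max τ (1 - τ)) →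
      ((a + b) / 2 - heinzHarm τ a b) / (τ * (1 - τ))
        ≤ ((a + b) / 2 - heinzHarm t a b) / (t * (1 - t))) ∧
    ((min τ (1 - τ) ≤ t ∧ t ≤ max τ (1 - τ)) →
      ((a + b) / 2 - heinzHarm t a b) / (t * (1 - t))
        ≤ ((a + b) / 2 - heinzHarm τ a b) / (τ * (1 - τ))) := by
  obtain ⟨hτ0, hτ1⟩ := hτ
  obtain ⟨ht0, ht1⟩ := ht
  have h1t : (0:ℝ) < 1 - t := by linarith
  have h1τ : (0:ℝ) < 1 - τ := by linarith
  rw [heinz_key a b τ ha hb ⟨hτ0, hτ1⟩, heinz_key a b t ha hb ⟨ht0, ht1⟩]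
  have hnum : (0:ℝ) ≤ (a + b) * (a - b) ^ 2 := by positivity
  have hDt : (0:ℝ) < 2 * (t * (1 - t) * (a - b) ^ 2 + a * b) := by positivity
  have hDτ : (0:ℝ) < 2 * (τ * (1 - τ) * (a - b) ^ 2 + a * b) := by positivity
  constructor
  · rintro (h | h)
    · have hu : t * (1 - t) ≤ τ * (1 - τ) := by
        have h1 : t ≤ τ := le_trans h (min_le_left _ _)
        have h2 : t ≤ 1 - τ := le_trans h (min_le_right _ _)
        nlinarith
      exact div_le_div_of_nonneg_left hnum hDt (by nlinarith [sq_nonneg (a - b)])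
    · have hu : t * (1 - t) ≤ τ * (1 - τ) := by
        have h1 : τ ≤ t := le_trans (le_max_left _ _) h
        have h2 : 1 - τ ≤ t := le_trans (le_max_right _ _) h
        nlinarith
      exact div_le_div_of_nonneg_left hnum hDt (by nlinarith [sq_nonneg (a - b)])
  · rintro ⟨h1, h2⟩
    have hu : τ * (1 - τ) ≤ t * (1 - t) := by
      rcases le_total τ (1 - τ) with hc | hc
      · rw [min_eq_left hc] at h1; rw [max_eq_right hc] at h2; nlinarith
      · rw [min_eq_right hc] at h1; rw [max_eq_left hc] at h2; nlinarith
    exact div_le_div_of_nonneg_left hnum hDτ (by nlinarith [sq_nonneg (a - b)])
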